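/- arXiv:2603.29865 — 2 statements merged into one kernel-verified Lean document; each statement's English description precedes it below -/
import Mathlib

section
/- Let G=(V,A) be a directed graph with positive arc costs, s,t ∈ V, h > 0, and S ⊆ V \ {s,t}. Suppose every vertex in S, when protected, adds delay Δ = h to all its outgoing arcs, and define the delayed arrival time a^S_t as the shortest s–t path cost where every arc leaving a vertex of S is increased by h. Then a^S_t ≥ h if and only if the shortest s–t path in the vertex-deleted subgraph G \ S has cost at least h. -/
open scoped ENNReal

/-- `l` is a directed path from `u` to `v` along arc relation `A`. -/
def IsPathFrom {V : Type*} (A : V → V → Prop) (u v : V) (l : List V) : Prop :=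
  l.head? = some u ∧ l.getLast? = some v ∧ l.Chain' A

/-- Total cost of a path: sum of arc costs over consecutive pairs. -/
def pathCost {V : Type*} (c : V → V → ℝ) (l : List V) : ℝ :=
  ((l.zip l.tail).map fun p => c p.1 p.2).sum

/-- Shortest-path distance from `u` to `v` (infimum of path costs, `⊤` if unreachable). -/
noncomputable def gdist {V : Type*} (A : V → V → Prop) (c : V → V → ℝ) (u v : V) : ℝ≥0∞ :=
  ⨅ l : {l : List V // IsPathFrom A u v l}, ENNReal.ofReal (pathCost c l)

open Classical in
/-- Arc costs after protecting the vertices of `P`: every outgoing arc of a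
protected vertex is delayed by `Δ`. -/
noncomputable def delCost {V : Type*} (c : V → V → ℝ) (P : Set V) (Δ : ℝ) : V → V → ℝ :=
  fun u v => c u v + (if u ∈ P then Δ else 0)

lemma pathCost_nil {V : Type*} (c : V → V → ℝ) : pathCost c ([] : List V) = 0 := by
  simp [pathCost]

lemma pathCost_single {V : Type*} (c : V → V → ℝ) (a : V) : pathCost c [a] = 0 := by
  simp [pathCost]

lemma pathCost_cons_cons {V : Type*} (c : V → V → ℝ) (a b : V) (l : List V) :
    pathCost c (a :: b :: l) = c a b + pathCost c (b :: l) := by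
  simp [pathCost]

lemma pathCost_nonneg {V : Type*} (A : V → V → Prop) (c : V → V → ℝ)
    (hc : ∀ u v, A u v → 0 ≤ c u v) :
    ∀ l : List V, l.Chain' A → 0 ≤ pathCost c l
  | [] => fun _ => by simp [pathCost_nil]
  | [a] => fun _ => by simp [pathCost_single]
  | a :: b :: l => fun hch => by
      rw [pathCost_cons_cons]
      rcases List.isChain_cons_cons.mp hch with ⟨hab, htl⟩
      have := pathCost_nonneg A c hc (b :: l) htl
      have := hc a b hab
      linarith

lemma chain'_restrict {V : Type*} (A : V → V → Prop) (S : Set V) :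
    ∀ l : List V, (∀ x ∈ l, x ∉ S) → l.Chain' A →
      l.Chain' (fun u v => A u v ∧ u ∉ S ∧ v ∉ S)
  | [] => fun _ _ => List.isChain_nil
  | [a] => fun _ _ => List.isChain_singleton a
  | a :: b :: l => fun hmem hch => by
      rcases List.isChain_cons_cons.mp hch with ⟨hab, htl⟩
      exact List.isChain_cons_cons.mpr
        ⟨⟨hab, hmem a (by simp), hmem b (by simp)⟩,
          chain'_restrict A S (b :: l) (fun x hx => hmem x (by simp [hx])) htl⟩

lemma delCost_eq_of_restrict {V : Type*} (c : V → V → ℝ) (S : Set V) (Δ : ℝ)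
    (A : V → V → Prop) :
    ∀ l : List V, l.Chain' (fun u v => A u v ∧ u ∉ S ∧ v ∉ S) →
      pathCost (delCost c S Δ) l = pathCost c l
  | [] => fun _ => by simp [pathCost_nil]
  | [a] => fun _ => by simp [pathCost_single]
  | a :: b :: l => fun hch => by
      rcases List.isChain_cons_cons.mp hch with ⟨⟨_, haS, _⟩, htl⟩
      rw [pathCost_cons_cons, pathCost_cons_cons,
        delCost_eq_of_restrict c S Δ A (b :: l) htl]
      simp [delCost, haS]

lemma delCost_ge_of_mem {V : Type*} (A : V → V → Prop) (c : V → V → ℝ)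
    (hpos : ∀ u v, A u v → 0 < c u v) (S : Set V) (h : ℝ) (hh : 0 < h) (tv : V)
    (ht : tv ∉ S) :
    ∀ l : List V, l.Chain' A → l.getLast? = some tv → (∃ u ∈ l, u ∈ S) →
      h ≤ pathCost (delCost c S h) l
  | [] => fun _ _ hex => by simp at hex
  | [a] => fun _ hlast hex => by
      simp at hlast hex
      subst hlast
      exact absurd hex ht
  | a :: b :: l => fun hch hlast hex => by
      rcases List.isChain_cons_cons.mp hch with ⟨hab, htl⟩
      have hnn : 0 ≤ pathCost (delCost c S h) (b :: l) :=
        pathCost_nonneg A (delCost c S h)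
          (fun u v huv => by
            have := (hpos u v huv).le
            unfold delCost
            split <;> linarith) (b :: l) htl
      have hlast' : (b :: l).getLast? = some tv := by
        rw [← hlast]; simp [List.getLast?_cons_cons]
      rw [pathCost_cons_cons]
      by_cases haS : a ∈ S
      · have : delCost c S h a b = c a b + h := by simp [delCost, haS]
        have := hpos a b hab
        linarith
      · rcases hex with ⟨u, hu, huS⟩
        have hu' : u ∈ b :: l := by
          rcases List.mem_cons.mp hu with rfl | hu'
          · exact absurd huS haS
          · exact hu'
        have hrec := delCost_ge_of_mem A c hpos S h hh tv ht (b :: l) htl hlast' ⟨u, hu', huS⟩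
        have : 0 ≤ delCost c S h a b := by
          have := (hpos a b hab).le
          unfold delCost; split <;> linarith
        linarith

/-- with delay `Δ = h` on outgoing arcs of protected vertices `S`,
the delayed arrival time at `t` is at least `h` iff the shortest `s`–`t` path in
the vertex-deleted subgraph `G \ S` has cost at least `h`. -/
theorem delayed_dist_ge_iff_deleted_dist_ge {V : Type*} (A : V → V → Prop)
    (t : V → V → ℝ) (hpos : ∀ u v, A u v → 0 < t u v)
    (s tv : V) (h : ℝ) (hh : 0 < h)
    (S : Set V) (hs : s ∉ S) (ht : tv ∉ S) :
    ENNReal.ofReal h ≤ gdist A (delCost t S h) s tv ↔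
    ENNReal.ofReal h ≤ gdist (fun u v => A u v ∧ u ∉ S ∧ v ∉ S) t s tv := by
  unfold gdist
  rw [le_iInf_iff, le_iInf_iff]
  constructor
  · rintro H ⟨l, hhead, hlast, hch⟩
    have hchA : l.Chain' A := hch.imp (fun _ _ hx => hx.1)
    have heq := delCost_eq_of_restrict t S h A l hch
    have := H ⟨l, hhead, hlast, hchA⟩
    simpa [heq] using this
  · rintro H ⟨l, hhead, hlast, hch⟩
    by_cases hex : ∃ u ∈ l, u ∈ S
    · have := delCost_ge_of_mem A t hpos S h hh tv ht l hch hlast hex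
      exact ENNReal.ofReal_le_ofReal this
    · push_neg at hex
      have hch' := chain'_restrict A S l hex hch
      have := H ⟨l, hhead, hlast, hch'⟩
      have heq := delCost_eq_of_restrict t S h A l hch'
      simpa [heq] using this
end

section
/- In the WWSP reduction with vertex weights w_v = [v = t], horizon H = h, delay Δ = h, and forbidden set F = {s,t}: an allocation Λ with P^Λ ∩ F = ∅ achieves weighted burned value 0 if and only if the delayed arrival time of t under Λ is at least h, which holds if and only if d_{G\P^Λ}(s,t) ≥ h. -/
open scoped ENNReal

lemma chain'_iff_zip {V : Type*} (R : V → V → Prop) :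
    ∀ (l : List V), l.Chain' R ↔ ∀ p ∈ l.zip l.tail, R p.1 p.2
  | [] => by simp [List.Chain']
  | [a] => by simp [List.Chain']
  | a :: b :: l => by
    show List.IsChain R (a :: b :: l) ↔ _
    rw [List.isChain_cons_cons, show List.IsChain R (b :: l) ↔ _ from chain'_iff_zip R (b :: l)]
    simp only [List.tail_cons, List.zip_cons_cons, List.mem_cons]
    constructor
    · rintro ⟨hab, hrest⟩ p (rfl | hp)
      · exact hab
      · exact hrest p hp
    · intro hall
      exact ⟨hall (a, b) (Or.inl rfl), fun p hp => hall p (Or.inr hp)⟩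

lemma exists_succ_of_ne_last {V : Type*} :
    ∀ (l : List V) (u w : V), u ∈ l → l.getLast? = some w → u ≠ w →
      ∃ v, (u, v) ∈ l.zip l.tail
  | [], u, w, hu, _, _ => absurd hu (List.not_mem_nil (a := u))
  | [a], u, w, hu, hw, hne => by
      simp only [List.mem_singleton] at hu
      simp only [List.getLast?_singleton, Option.some.injEq] at hw
      exact absurd (hu.trans hw) hne
  | a :: b :: l, u, w, hu, hw, hne => by
      rw [List.mem_cons] at hu
      rcases hu with rfl | hu
      · exact ⟨b, by simp⟩
      · have hw' : (b :: l).getLast? = some w := by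
          rwa [List.getLast?_cons_cons] at hw
        obtain ⟨v, hv⟩ := exists_succ_of_ne_last (b :: l) u w hu hw' hne
        exact ⟨v, List.mem_cons_of_mem _ hv⟩

open Classical in
/-- in the WWSP reduction with weights `w_v = [v = t]`, horizon
`H = h`, delay `Δ = h` and forbidden set `{s, t}`, an allocation protecting
`P ⊆ V \ {s,t}` has weighted burned value `0` iff the delayed arrival time at `t`
is at least `h`, iff `d_{G\P}(s,t) ≥ h`. -/
theorem wwsp_reduction_equivalences {V : Type*} [Fintype V] (A : V → V → Prop)
    (t : V → V → ℝ) (hpos : ∀ u v, A u v → 0 < t u v)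
    (s tv : V) (hstv : s ≠ tv) (h : ℝ) (hh : 0 < h)
    (P : Set V) (hs : s ∉ P) (ht : tv ∉ P) :
    ((∑ v : V, (if v = tv then (1 : ℝ) else 0) *
        (if gdist A (delCost t P h) s v < ENNReal.ofReal h then 1 else 0)) = 0 ↔
      ENNReal.ofReal h ≤ gdist A (delCost t P h) s tv) ∧
    (ENNReal.ofReal h ≤ gdist A (delCost t P h) s tv ↔
      ENNReal.ofReal h ≤ gdist (fun u v => A u v ∧ u ∉ P ∧ v ∉ P) t s tv) := by
  classical
  constructor
  · -- part 1
    rw [show (∑ v : V, (if v = tv then (1 : ℝ) else 0) *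
        (if gdist A (delCost t P h) s v < ENNReal.ofReal h then 1 else 0)) =
        ∑ v : V, (if v = tv then
          (if gdist A (delCost t P h) s v < ENNReal.ofReal h then (1:ℝ) else 0) else 0)
      from Finset.sum_congr rfl fun v _ => by split_ifs <;> ring]
    rw [Finset.sum_ite_eq' Finset.univ tv]
    simp only [Finset.mem_univ, if_true]
    split_ifs with hd
    · simp [not_le.mpr hd]
    · simp [not_lt.mp hd]
  · -- part 2
    rw [gdist, gdist, le_iInf_iff, le_iInf_iff]
    constructor
    · rintro H ⟨l, hhead, hlast, hchain⟩
      have key := (chain'_iff_zip _ l).mp hchain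
      have hchainA : l.Chain' A := (chain'_iff_zip A l).mpr fun p hp => (key p hp).1
      have hcost : pathCost (delCost t P h) l = pathCost t l := by
        unfold pathCost
        refine congrArg List.sum (List.map_congr_left fun p hp => ?_)
        simp [delCost, (key p hp).2.1]
      calc ENNReal.ofReal h ≤ ENNReal.ofReal (pathCost (delCost t P h) l) :=
            H ⟨l, hhead, hlast, hchainA⟩
        _ = _ := by rw [hcost]
    · rintro H ⟨l, hhead, hlast, hchain⟩
      have key := (chain'_iff_zip A l).mp hchain
      have hnn : ∀ x ∈ (l.zip l.tail).map (fun p => delCost t P h p.1 p.2), 0 ≤ x := by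
        intro x hx
        obtain ⟨p, hp, rfl⟩ := List.mem_map.mp hx
        have := (hpos p.1 p.2 (key p hp)).le
        unfold delCost
        split_ifs <;> linarith
      by_cases hP : ∃ p ∈ l.zip l.tail, p.1 ∈ P
      · obtain ⟨p, hp, hpP⟩ := hP
        have hmem : delCost t P h p.1 p.2 ∈
            (l.zip l.tail).map (fun p => delCost t P h p.1 p.2) :=
          List.mem_map.mpr ⟨p, hp, rfl⟩
        have h1 : h ≤ delCost t P h p.1 p.2 := by
          have := (hpos p.1 p.2 (key p hp)).le
          simp only [delCost, if_pos hpP]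
          linarith
        have h2 : h ≤ pathCost (delCost t P h) l :=
          h1.trans (List.single_le_sum hnn _ hmem)
        exact ENNReal.ofReal_le_ofReal h2
      · push_neg at hP
        have hall : ∀ x ∈ l, x ∉ P := by
          intro x hx hxP
          have hne : x ≠ tv := fun hxt => ht (hxt ▸ hxP)
          obtain ⟨v, hv⟩ := exists_succ_of_ne_last l x tv hx hlast hne
          exact hP (x, v) hv hxP
        have hchain' : l.Chain' (fun u v => A u v ∧ u ∉ P ∧ v ∉ P) := by
          refine (chain'_iff_zip _ l).mpr fun p hp => ⟨key p hp, ?_, ?_⟩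
          · exact hall p.1 (List.of_mem_zip hp).1
          · exact hall p.2 (List.mem_of_mem_tail (List.of_mem_zip hp).2)
        have hcost : pathCost (delCost t P h) l = pathCost t l := by
          unfold pathCost
          refine congrArg List.sum (List.map_congr_left fun p hp => ?_)
          simp [delCost, hall p.1 (List.of_mem_zip hp).1]
        calc ENNReal.ofReal h ≤ ENNReal.ofReal (pathCost t l) :=
              H ⟨l, hhead, hlast, hchain'⟩
          _ = _ := by rw [hcost]
end
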